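/- Let G=(V,C,S,T) be a flow graph and H a group acting on V such that H preserves S setwise, preserves T setwise, and C(u,v)=C(h·u,h·v) for all h∈H and u,v∈V. Define the quotient flow graph G/H on the orbit set V/H with capacities (C/H)(A,B) = Σ_{u∈A} Σ_{v∈B} C(u,v), sources S/H, and sinks T/H. Then the maximum flow value of G equals the maximum flow value of G/H. -/

import Mathlib

open Finset

def IsFeasibleFlow {V : Type*} [Fintype V] (C : V → V → ℝ) (S T : Finset V)
    (w : V → V → ℝ) : Prop :=
  (∀ u v, 0 ≤ w u v) ∧ (∀ u v, w u v + w v u ≤ C u v) ∧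
    ∀ v, v ∉ S → v ∉ T → (∑ u, w v u) = (∑ u, w u v)

def flowVal {V : Type*} [Fintype V] (S : Finset V) (w : V → V → ℝ) : ℝ :=
  ∑ s ∈ S, ((∑ u, w s u) - ∑ u, w u s)

noncomputable def maxflowval {V : Type*} [Fintype V] (C : V → V → ℝ) (S T : Finset V) : ℝ :=
  sSup {x : ℝ | ∃ w : V → V → ℝ, IsFeasibleFlow C S T w ∧ flowVal S w = x}

open scoped Classical in
theorem maxflow_quotient {V : Type*} [Fintype V] [DecidableEq V]
    (C : V → V → ℝ) (hC0 : ∀ u v, 0 ≤ C u v) (hCsymm : ∀ u v, C u v = C v u)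
    (S T : Finset V) (hST : Disjoint S T)
    (H : Type*) [Group H] [MulAction H V]
    (hS : ∀ (h : H), ∀ s ∈ S, h • s ∈ S)
    (hT : ∀ (h : H), ∀ t ∈ T, h • t ∈ T)
    (hC : ∀ (h : H) (u v : V), C u v = C (h • u) (h • v)) :
    maxflowval C S T =
      maxflowval
        (fun A B : Quotient (MulAction.orbitRel H V) =>
          ∑ u ∈ univ.filter (fun u => Quotient.mk (MulAction.orbitRel H V) u = A),
            ∑ v ∈ univ.filter (fun v => Quotient.mk (MulAction.orbitRel H V) v = B), C u v)
        (S.image (Quotient.mk (MulAction.orbitRel H V)))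
        (T.image (Quotient.mk (MulAction.orbitRel H V))) := by
  set π : V → Quotient (MulAction.orbitRel H V) := Quotient.mk (MulAction.orbitRel H V) with hπdef
  set fib : Quotient (MulAction.orbitRel H V) → Finset V :=
    fun A => univ.filter (fun u => π u = A) with hfibdef
  set Cq : Quotient (MulAction.orbitRel H V) → Quotient (MulAction.orbitRel H V) → ℝ :=
    fun A B => ∑ u ∈ fib A, ∑ v ∈ fib B, C u v with hCqdef
  -- basic facts
  have hπs : ∀ (h : H) (v : V), π (h • v) = π v := fun h v => Quotient.sound (MulAction.mem_orbit v h)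
  have hπe : ∀ u v : V, π u = π v → ∃ h : H, h • v = u := fun u v h => Quotient.eq.mp h
  have hmemfib : ∀ (u : V) (A), u ∈ fib A ↔ π u = A := by
    intro u A; simp [hfibdef]
  have hSsat : ∀ v : V, π v ∈ S.image π ↔ v ∈ S := by
    intro v
    constructor
    · intro hv
      obtain ⟨s, hs, hsv⟩ := mem_image.mp hv
      obtain ⟨h, rfl⟩ := hπe v s hsv.symm
      exact hS h s hs
    · intro hv; exact mem_image_of_mem _ hv
  have hTsat : ∀ v : V, π v ∈ T.image π ↔ v ∈ T := by
    intro v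
    constructor
    · intro hv
      obtain ⟨s, hs, hsv⟩ := mem_image.mp hv
      obtain ⟨h, rfl⟩ := hπe v s hsv.symm
      exact hT h s hs
    · intro hv; exact mem_image_of_mem _ hv
  have hfibsum : ∀ f : V → ℝ, (∑ A, ∑ u ∈ fib A, f u) = ∑ u, f u := by
    intro f
    simpa [hfibdef] using Finset.sum_fiberwise univ π f
  have hSsum : ∀ f : V → ℝ, (∑ A ∈ S.image π, ∑ u ∈ fib A, f u) = ∑ u ∈ S, f u := by
    intro f
    rw [← Finset.sum_fiberwise_of_maps_to (fun u hu => mem_image_of_mem π hu) f]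
    refine Finset.sum_congr rfl fun A hA => Finset.sum_congr ?_ fun _ _ => rfl
    ext u
    simp only [hfibdef, mem_filter, mem_univ, true_and]
    constructor
    · intro h; exact ⟨(hSsat u).mp (h ▸ hA), h⟩
    · rintro ⟨_, h⟩; exact h
  have hCq0 : ∀ A B, 0 ≤ Cq A B := fun A B =>
    Finset.sum_nonneg fun u _ => Finset.sum_nonneg fun v _ => hC0 u v
  have hCqsymm : ∀ A B, Cq A B = Cq B A := by
    intro A B
    rw [hCqdef]
    dsimp only
    rw [Finset.sum_comm]
    exact Finset.sum_congr rfl fun v _ => Finset.sum_congr rfl fun u _ => hCsymm _ _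
  have hrow : ∀ (v v' : V) (B), π v = π v' → (∑ u ∈ fib B, C v u) = ∑ u ∈ fib B, C v' u := by
    intro v v' B he
    obtain ⟨h, rfl⟩ := hπe v' v he.symm
    refine Finset.sum_equiv (MulAction.toPerm h) ?_ ?_
    · intro u; simp [hfibdef, hπs]
    · intro u _; exact hC h v u
  have hCqcard : ∀ A B, ∀ v ∈ fib A, Cq A B = (fib A).card * ∑ u ∈ fib B, C v u := by
    intro A B v hv
    calc Cq A B = ∑ v' ∈ fib A, ∑ u ∈ fib B, C v' u := rfl
      _ = ∑ v' ∈ fib A, ∑ u ∈ fib B, C v u :=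
          Finset.sum_congr rfl fun v' hv' =>
            (hrow v' v B (((hmemfib v' A).mp hv').trans ((hmemfib v A).mp hv).symm))
      _ = (fib A).card * ∑ u ∈ fib B, C v u := by rw [Finset.sum_const, nsmul_eq_mul]
  have hfibne : ∀ A, (fib A).Nonempty := by
    intro A
    exact ⟨A.out, (hmemfib _ _).mpr (Quotient.out_eq A)⟩
  -- main equality of value sets
  unfold maxflowval
  congr 1
  ext x
  simp only [Set.mem_setOf_eq]
  constructor
  · rintro ⟨w, hw, rfl⟩
    have hout : ∀ A, (∑ B, ∑ u ∈ fib A, ∑ v ∈ fib B, w u v) = ∑ u ∈ fib A, ∑ v, w u v := by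
      intro A
      rw [Finset.sum_comm]
      exact Finset.sum_congr rfl fun u _ => hfibsum _
    have hin : ∀ A, (∑ B, ∑ u ∈ fib B, ∑ v ∈ fib A, w u v) = ∑ v ∈ fib A, ∑ u, w u v := by
      intro A
      rw [show (∑ B, ∑ u ∈ fib B, ∑ v ∈ fib A, w u v) = ∑ B, ∑ v ∈ fib A, ∑ u ∈ fib B, w u v from
        Finset.sum_congr rfl fun B _ => Finset.sum_comm, Finset.sum_comm]
      exact Finset.sum_congr rfl fun v _ => hfibsum _
    refine ⟨fun A B => ∑ u ∈ fib A, ∑ v ∈ fib B, w u v, ⟨fun A B => ?_, fun A B => ?_,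
      fun A hA hA' => ?_⟩, ?_⟩
    · exact Finset.sum_nonneg fun u _ => Finset.sum_nonneg fun v _ => hw.1 u v
    · show (∑ u ∈ fib A, ∑ v ∈ fib B, w u v) + (∑ u ∈ fib B, ∑ v ∈ fib A, w u v) ≤ Cq A B
      rw [show (∑ u ∈ fib B, ∑ v ∈ fib A, w u v) = ∑ u ∈ fib A, ∑ v ∈ fib B, w v u from
        Finset.sum_comm, ← Finset.sum_add_distrib]
      refine Finset.sum_le_sum fun u _ => ?_
      rw [← Finset.sum_add_distrib]
      exact Finset.sum_le_sum fun v _ => hw.2.1 u v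
    · show (∑ B, ∑ u ∈ fib A, ∑ v ∈ fib B, w u v) = ∑ B, ∑ u ∈ fib B, ∑ v ∈ fib A, w u v
      rw [hout A, hin A]
      refine Finset.sum_congr rfl fun u hu => ?_
      have hπu : π u = A := (hmemfib u A).mp hu
      exact hw.2.2 u (fun hus => hA (hπu ▸ mem_image_of_mem π hus))
        (fun hut => hA' (hπu ▸ mem_image_of_mem π hut))
    · show flowVal _ _ = flowVal S w
      unfold flowVal
      calc (∑ A ∈ S.image π, ((∑ B, ∑ u ∈ fib A, ∑ v ∈ fib B, w u v)
              - ∑ B, ∑ u ∈ fib B, ∑ v ∈ fib A, w u v))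
          = ∑ A ∈ S.image π, ∑ u ∈ fib A, ((∑ v, w u v) - ∑ v, w v u) := by
            refine Finset.sum_congr rfl fun A _ => ?_
            rw [hout A, hin A, ← Finset.sum_sub_distrib]
        _ = ∑ u ∈ S, ((∑ v, w u v) - ∑ v, w v u) := hSsum _
  · rintro ⟨W, hW, rfl⟩
    have hW0 : ∀ A B, Cq A B = 0 → W A B = 0 := by
      intro A B h0
      have h1 := hW.2.1 A B
      rw [h0] at h1
      have := hW.1 A B
      have := hW.1 B A
      linarith
    set w : V → V → ℝ := fun u v =>
      if Cq (π u) (π v) = 0 then 0 else W (π u) (π v) * C u v / Cq (π u) (π v) with hwdef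
    have hcard : ∀ A, ((fib A).card : ℝ) ≠ 0 := fun A =>
      Nat.cast_ne_zero.mpr (Finset.card_pos.mpr (hfibne A)).ne'
    -- row sums of the lifted flow over a fiber
    have hfibout : ∀ (v : V) (B), (∑ u ∈ fib B, w v u) = W (π v) B / (fib (π v)).card := by
      intro v B
      by_cases h0 : Cq (π v) B = 0
      · rw [hW0 _ _ h0, zero_div]
        refine Finset.sum_eq_zero fun u hu => ?_
        rw [hwdef]
        dsimp only
        rw [(hmemfib u B).mp hu, if_pos h0]
      · have hv : v ∈ fib (π v) := (hmemfib _ _).mpr rfl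
        have hcq := hCqcard (π v) B v hv
        have hrne : (∑ u ∈ fib B, C v u) ≠ 0 := by
          intro h; exact h0 (by rw [hcq, h, mul_zero])
        calc (∑ u ∈ fib B, w v u) = ∑ u ∈ fib B, W (π v) B * C v u / Cq (π v) B := by
              refine Finset.sum_congr rfl fun u hu => ?_
              rw [hwdef]; dsimp only
              rw [(hmemfib u B).mp hu, if_neg h0]
          _ = W (π v) B * (∑ u ∈ fib B, C v u) / Cq (π v) B := by
              rw [← Finset.sum_div, ← Finset.mul_sum]
          _ = W (π v) B / (fib (π v)).card := by
              rw [hcq, mul_comm ((fib (π v)).card : ℝ), ← div_div,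
                mul_div_cancel_right₀ _ hrne]
    have hfibin : ∀ (v : V) (B), (∑ u ∈ fib B, w u v) = W B (π v) / (fib (π v)).card := by
      intro v B
      by_cases h0 : Cq B (π v) = 0
      · rw [hW0 _ _ h0, zero_div]
        refine Finset.sum_eq_zero fun u hu => ?_
        rw [hwdef]
        dsimp only
        rw [(hmemfib u B).mp hu, if_pos h0]
      · have hv : v ∈ fib (π v) := (hmemfib _ _).mpr rfl
        have h0' : Cq (π v) B ≠ 0 := fun h => h0 ((hCqsymm B (π v)).trans h)
        have hcq := hCqcard (π v) B v hv
        have hrne : (∑ u ∈ fib B, C v u) ≠ 0 := by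
          intro h; exact h0' (by rw [hcq, h, mul_zero])
        calc (∑ u ∈ fib B, w u v) = ∑ u ∈ fib B, W B (π v) * C v u / Cq B (π v) := by
              refine Finset.sum_congr rfl fun u hu => ?_
              rw [hwdef]; dsimp only
              rw [(hmemfib u B).mp hu, if_neg h0, hCsymm u v]
          _ = W B (π v) * (∑ u ∈ fib B, C v u) / Cq B (π v) := by
              rw [← Finset.sum_div, ← Finset.mul_sum]
          _ = W B (π v) / (fib (π v)).card := by
              rw [hCqsymm B (π v), hcq, mul_comm ((fib (π v)).card : ℝ), ← div_div,
                mul_div_cancel_right₀ _ hrne]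
    have hout2 : ∀ v : V, (∑ u, w v u) = (∑ B, W (π v) B) / (fib (π v)).card := by
      intro v
      rw [← hfibsum (fun u => w v u)]
      rw [Finset.sum_congr rfl fun B _ => hfibout v B, ← Finset.sum_div]
    have hin2 : ∀ v : V, (∑ u, w u v) = (∑ B, W B (π v)) / (fib (π v)).card := by
      intro v
      rw [← hfibsum (fun u => w u v)]
      rw [Finset.sum_congr rfl fun B _ => hfibin v B, ← Finset.sum_div]
    refine ⟨w, ⟨fun u v => ?_, fun u v => ?_, fun v hvS hvT => ?_⟩, ?_⟩
    · rw [hwdef]; dsimp only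
      split
      · exact le_rfl
      · exact div_nonneg (mul_nonneg (hW.1 _ _) (hC0 _ _)) (hCq0 _ _)
    · rw [hwdef]; dsimp only
      by_cases h0 : Cq (π u) (π v) = 0
      · rw [if_pos h0, if_pos ((hCqsymm (π v) (π u)).trans h0), add_zero]
        exact hC0 u v
      · have h0' : Cq (π v) (π u) ≠ 0 := fun h => h0 ((hCqsymm (π u) (π v)).trans h)
        rw [if_neg h0, if_neg h0', hCqsymm (π v) (π u), hCsymm v u]
        have hpos : 0 < Cq (π u) (π v) := lt_of_le_of_ne (hCq0 _ _) (Ne.symm h0)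
        rw [← add_div, div_le_iff₀ hpos]
        have hle := hW.2.1 (π u) (π v)
        nlinarith [hC0 u v]
    · rw [hout2, hin2]
      rw [hW.2.2 (π v) (fun hh => hvS ((hSsat v).mp hh)) (fun hh => hvT ((hTsat v).mp hh))]
    · show flowVal S w = flowVal (S.image π) W
      unfold flowVal
      calc (∑ s ∈ S, ((∑ u, w s u) - ∑ u, w u s))
          = ∑ s ∈ S, ((∑ B, W (π s) B) - ∑ B, W B (π s)) / ((fib (π s)).card : ℝ) := by
            refine Finset.sum_congr rfl fun s _ => ?_
            rw [hout2, hin2, div_sub_div_same]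
        _ = ∑ A ∈ S.image π, ∑ s ∈ fib A, ((∑ B, W A B) - ∑ B, W B A) / ((fib A).card : ℝ) := by
            rw [← hSsum fun s => ((∑ B, W (π s) B) - ∑ B, W B (π s)) / ((fib (π s)).card : ℝ)]
            refine Finset.sum_congr rfl fun A hA => Finset.sum_congr rfl fun s hs => ?_
            rw [(hmemfib s A).mp hs]
        _ = ∑ A ∈ S.image π, ((∑ B, W A B) - ∑ B, W B A) := by
            refine Finset.sum_congr rfl fun A hA => ?_
            rw [Finset.sum_const, nsmul_eq_mul, mul_div_cancel₀ _ (hcard A)]
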